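/- Let E be the dense subspace of ℓ¹ consisting of eventually-zero real sequences, with the subspace topology. There exists a complete locally convex space F and a smooth map f : E → F (in the Michal–Bastiani sense; equivalently here, f is smooth on a neighbourhood of each point as a map into a finite-dimensional subspace of a factor) that admits no continuous extension to E ∪ {z} for any z ∈ ℓ¹ \ E. -/

import Mathlib

open Filter Topology

/-- `HasMBDerivAt f x y v` : the directional (Gâteaux) derivative of `f` at `x` in the
direction `y` exists and equals `v`, in the Michal–Bastiani sense. -/
def HasMBDerivAt {G F : Type*} [AddCommGroup G] [Module ℝ G] [TopologicalSpace G]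
    [AddCommGroup F] [Module ℝ F] [TopologicalSpace F]
    (f : G → F) (x y : G) (v : F) : Prop :=
  Tendsto (fun t : ℝ => t⁻¹ • (f (x + t • y) - f x)) (𝓝[≠] (0 : ℝ)) (𝓝 v)

/-- `ContDiffMB n f U` : the map `f` is `C^n` on the open set `U` in the
Michal–Bastiani sense. -/
def ContDiffMB {G F : Type*} [AddCommGroup G] [Module ℝ G] [TopologicalSpace G]
    [AddCommGroup F] [Module ℝ F] [TopologicalSpace F]
    (n : ℕ) (f : G → F) (U : Set G) : Prop :=
  ∃ D : ∀ k : ℕ, G × (Fin k → G) → F,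
    (∀ x y, D 0 (x, y) = f x) ∧
    (∀ k, k < n → ∀ x ∈ U, ∀ y : Fin (k + 1) → G,
      HasMBDerivAt (fun x' => D k (x', fun i : Fin k => y i.castSucc)) x (y (Fin.last k))
        (D (k + 1) (x, y))) ∧
    (∀ k, k ≤ n → ContinuousOn (D k) (U ×ˢ Set.univ))

/-- The dense subspace of `ℓ¹` consisting of the eventually-zero sequences, with the
subspace topology. -/
noncomputable def finSupportSubspace : Submodule ℝ (lp (fun _ : ℕ => ℝ) 1) where
  carrier := {x | ∃ N, ∀ n ≥ N, x n = 0}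
  zero_mem' := ⟨0, fun n _ => by simp⟩
  add_mem' := by
    rintro x y ⟨N, hN⟩ ⟨M, hM⟩
    exact ⟨max N M, fun n hn => by
      simp [hN n (le_trans (le_max_left _ _) hn), hM n (le_trans (le_max_right _ _) hn)]⟩
  smul_mem' := by
    rintro c x ⟨N, hN⟩
    exact ⟨N, fun n hn => by simp [hN n hn]⟩

/-- A smooth (Michal–Bastiani) map from the eventually-zero sequences `E ⊆ ℓ¹` to a
complete locally convex space `F` that has no continuous extension to `E ∪ {z}` for
any `z ∈ ℓ¹ \ E`. -/
structure PathologicalSmoothMap : Type 1 where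
  F : Type
  [grp : AddCommGroup F]
  [uni : UniformSpace F]
  [mod : Module ℝ F]
  [uag : IsUniformAddGroup F]
  [csm : ContinuousSMul ℝ F]
  [lcs : LocallyConvexSpace ℝ F]
  [cpl : CompleteSpace F]
  f : finSupportSubspace → F
  smooth : ∀ n : ℕ, ContDiffMB n f Set.univ
  no_extension : ∀ z : lp (fun _ : ℕ => ℝ) 1, z ∉ finSupportSubspace →
    ¬∃ g : ((finSupportSubspace : Set (lp (fun _ : ℕ => ℝ) 1)) ∪ {z} :
        Set (lp (fun _ : ℕ => ℝ) 1)) → F,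
      Continuous g ∧ ∀ x : finSupportSubspace, g ⟨x.1, Or.inl x.2⟩ = f x

noncomputable section PathoAux

namespace Patho

instance factOne : Fact ((1 : ENNReal) ≤ 1) := ⟨le_rfl⟩

abbrev L1 := lp (fun _ : ℕ => ℝ) 1

/-- a smooth bump at `c ≠ 0`, vanishing near `0` -/
def B (c : ℝ) (hc : c ≠ 0) : ContDiffBump c :=
  ⟨|c| / 4, |c| / 2, by have := abs_pos.2 hc; linarith, by have := abs_pos.2 hc; linarith⟩

/-- smooth factor functions -/
def H (ζ : ℕ → ℝ) (m : ℕ) : ℝ → ℝ :=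
  if h : ζ m = 0 then fun _ => 1
  else ⇑(B (ζ m) h)

lemma H_contDiff (ζ : ℕ → ℝ) (m : ℕ) (k : ℕ) : ContDiff ℝ k (H ζ m) := by
  unfold H
  split
  · exact contDiff_const
  · exact ContDiffBump.contDiff _

lemma H_self (ζ : ℕ → ℝ) (m : ℕ) : H ζ m (ζ m) = 1 := by
  unfold H
  split
  · rfl
  · next h =>
      exact (B _ h).one_of_mem_closedBall
        (Metric.mem_closedBall_self (by have := abs_pos.2 h; unfold B; simp; linarith))

lemma H_nonneg (ζ : ℕ → ℝ) (m : ℕ) (t : ℝ) : 0 ≤ H ζ m t := by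
  unfold H
  split
  · exact zero_le_one
  · exact ContDiffBump.nonneg _


lemma H_zero (ζ : ℕ → ℝ) (m : ℕ) (hm : ζ m ≠ 0) {t : ℝ} (ht : |t| < |ζ m| / 2) :
    H ζ m t = 0 := by
  unfold H
  rw [dif_neg hm]
  refine (B (ζ m) hm).zero_of_le_dist ?_
  have h1 : |ζ m| - |t| ≤ |ζ m - t| := abs_sub_abs_le_abs_sub _ _
  have h2 : dist t (ζ m) = |ζ m - t| := by rw [Real.dist_eq, abs_sub_comm]
  have h3 : (B (ζ m) hm).rOut = |ζ m| / 2 := rfl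
  rw [h2, h3]
  linarith

/-- cylinder function of the first `n+1` coordinates -/
def Phi (ζ : ℕ → ℝ) (n : ℕ) (u : Fin (n + 1) → ℝ) : ℝ :=
  ∏ m : Fin (n + 1), H ζ m (u m)

lemma Phi_contDiff (ζ : ℕ → ℝ) (n : ℕ) (k : ℕ) : ContDiff ℝ k (Phi ζ n) := by
  refine contDiff_prod fun m _ => ?_
  exact (H_contDiff ζ m k).comp (ContinuousLinearMap.proj (R := ℝ)
    (φ := fun _ : Fin (n + 1) => ℝ) m).contDiff

lemma Phi_nonneg (ζ : ℕ → ℝ) (n : ℕ) (u : Fin (n + 1) → ℝ) : 0 ≤ Phi ζ n u :=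
  Finset.prod_nonneg fun m _ => H_nonneg ζ m (u m)

lemma Phi_eq_zero (ζ : ℕ → ℝ) (n : ℕ) {j : Fin (n + 1)} (hj : ζ j ≠ 0) {u : Fin (n + 1) → ℝ}
    (hu : |u j| < |ζ j| / 2) : Phi ζ n u = 0 :=
  Finset.prod_eq_zero (Finset.mem_univ j) (H_zero ζ j hj hu)

/-- projection onto the first `N` coordinates -/
def pr (N : ℕ) (x : finSupportSubspace) : Fin N → ℝ := fun i => (x : L1) i

lemma eval_lipschitz (i : ℕ) : LipschitzWith 1 (fun x : L1 => x i) := by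
  refine LipschitzWith.of_dist_le_mul fun x y => ?_
  rw [NNReal.coe_one, one_mul, dist_eq_norm, dist_eq_norm]
  have h := lp.norm_apply_le_norm (E := fun _ : ℕ => ℝ) (p := 1) one_ne_zero (x - y) i
  rwa [lp.coeFn_sub, Pi.sub_apply] at h

lemma continuous_pr (N : ℕ) : Continuous (pr N) :=
  continuous_pi fun i => ((eval_lipschitz i).continuous).comp continuous_subtype_val

lemma pr_add_smul (N : ℕ) (x y : finSupportSubspace) (t : ℝ) :
    pr N (x + t • y) = pr N x + t • pr N y := by
  funext i
  simp only [pr, Submodule.coe_add, Submodule.coe_smul, lp.coeFn_add, lp.coeFn_smul,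
    Pi.add_apply, Pi.smul_apply, smul_eq_mul]

lemma iteratedFDeriv_eq_zero_of_eventually {N : ℕ} {f : (Fin N → ℝ) → ℝ} {x : Fin N → ℝ}
    (h : f =ᶠ[𝓝 x] (fun _ => 0)) (k : ℕ) : iteratedFDeriv ℝ k f x = 0 := by
  have h' : f =ᶠ[𝓝[Set.univ] x] (fun _ => 0) := by
    rw [nhdsWithin_univ]; exact h
  have h2 := h'.iteratedFDerivWithin_eq (𝕜 := ℝ) h.self_of_nhds k
  rw [iteratedFDerivWithin_univ, iteratedFDerivWithin_univ] at h2
  rw [h2, iteratedFDeriv_zero_fun, Pi.zero_apply]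

/-- the `n`-th term of the `k`-th derivative -/
def term (ζ : ℕ → ℝ) (k : ℕ) (x : finSupportSubspace) (y : Fin k → finSupportSubspace)
    (n : ℕ) : ℝ :=
  iteratedFDeriv ℝ k (Phi ζ n) (pr (n + 1) x) (fun i => pr (n + 1) (y i.rev))

/-- the `k`-th Gâteaux derivative of our function, as a tsum -/
def Dz (ζ : ℕ → ℝ) (k : ℕ) (x : finSupportSubspace) (y : Fin k → finSupportSubspace) : ℝ :=
  ∑' n, term ζ k x y n

/-- the function itself -/
def fz (ζ : ℕ → ℝ) (x : finSupportSubspace) : ℝ := ∑' n, Phi ζ n (pr (n + 1) x)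

lemma Dz_zero_eq (ζ : ℕ → ℝ) (x : finSupportSubspace) (y : Fin 0 → finSupportSubspace) :
    Dz ζ 0 x y = fz ζ x :=
  tsum_congr fun n => iteratedFDeriv_zero_apply _

/-- Key local vanishing lemma -/
lemma exists_good (ζ : ℕ → ℝ) (hζ : ∀ N, ∃ m, N ≤ m ∧ ζ m ≠ 0) (x₀ : finSupportSubspace) :
    ∃ (M : ℕ) (ε : ℝ), 0 < ε ∧ ∀ x : finSupportSubspace, ‖(x : L1) - (x₀ : L1)‖ < ε →
      ∀ n, M ≤ n → ∀ k, iteratedFDeriv ℝ k (Phi ζ n) (pr (n + 1) x) = 0 := by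
  have hx₀ : ∃ N, ∀ n ≥ N, (x₀ : L1) n = 0 := x₀.2
  obtain ⟨N, hN⟩ := hx₀
  obtain ⟨m₀, hm₀N, hm₀⟩ := hζ N
  refine ⟨m₀, |ζ m₀| / 2, half_pos (abs_pos.2 hm₀), ?_⟩
  intro x hx n hn k
  have hxm : |(x : L1) m₀| < |ζ m₀| / 2 := by
    have h1 : (x₀ : L1) m₀ = 0 := hN m₀ hm₀N
    have h2 : ‖((x : L1) - (x₀ : L1)) m₀‖ ≤ ‖(x : L1) - (x₀ : L1)‖ :=
      lp.norm_apply_le_norm one_ne_zero _ m₀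
    rw [lp.coeFn_sub, Pi.sub_apply, h1, sub_zero, Real.norm_eq_abs] at h2
    exact lt_of_le_of_lt h2 hx
  have hj : m₀ < n + 1 := by omega
  have hev : Phi ζ n =ᶠ[𝓝 (pr (n + 1) x)] (fun _ => 0) := by
    have hcont : Continuous fun u : Fin (n + 1) → ℝ => |u ⟨m₀, hj⟩| :=
      (continuous_apply (⟨m₀, hj⟩ : Fin (n + 1))).abs
    have hopen : IsOpen {u : Fin (n + 1) → ℝ | |u ⟨m₀, hj⟩| < |ζ m₀| / 2} :=
      isOpen_lt hcont continuous_const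
    refine Filter.eventually_of_mem (hopen.mem_nhds ?_) ?_
    · exact hxm
    · intro u hu
      exact Phi_eq_zero ζ n (j := ⟨m₀, hj⟩) hm₀ hu
  exact iteratedFDeriv_eq_zero_of_eventually hev k

lemma term_eq_zero {ζ : ℕ → ℝ} {n k : ℕ} {x : finSupportSubspace}
    (h : iteratedFDeriv ℝ k (Phi ζ n) (pr (n + 1) x) = 0)
    (y : Fin k → finSupportSubspace) : term ζ k x y n = 0 := by
  unfold term
  rw [h]
  rfl

/-- on the good ball, `Dz` is a finite sum -/
lemma Dz_eq_sum {ζ : ℕ → ℝ} {M : ℕ} {x : finSupportSubspace}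
    (h : ∀ n, M ≤ n → ∀ k, iteratedFDeriv ℝ k (Phi ζ n) (pr (n + 1) x) = 0)
    (k : ℕ) (y : Fin k → finSupportSubspace) :
    Dz ζ k x y = ∑ n ∈ Finset.range M, term ζ k x y n :=
  tsum_eq_sum fun n hn => term_eq_zero (h n (by simpa using hn) k) y

lemma fin_rev_zero (k : ℕ) : (Fin.rev 0 : Fin (k + 1)) = Fin.last k := by
  ext
  simp [Fin.val_rev]

lemma fin_rev_succ {k : ℕ} (j : Fin k) : Fin.rev j.succ = j.rev.castSucc := by
  ext
  simp only [Fin.val_rev, Fin.val_succ, Fin.coe_castSucc]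
  omega

lemma term_continuous (ζ : ℕ → ℝ) (k n : ℕ) :
    Continuous (fun p : finSupportSubspace × (Fin k → finSupportSubspace) =>
      term ζ k p.1 p.2 n) := by
  have h1 : Continuous fun p : finSupportSubspace × (Fin k → finSupportSubspace) =>
      iteratedFDeriv ℝ k (Phi ζ n) (pr (n + 1) p.1) :=
    ((Phi_contDiff ζ n k).continuous_iteratedFDeriv le_rfl).comp
      ((continuous_pr _).comp continuous_fst)
  have h2 : Continuous fun p : finSupportSubspace × (Fin k → finSupportSubspace) =>
      (fun i : Fin k => pr (n + 1) (p.2 i.rev)) :=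
    continuous_pi fun i => (continuous_pr _).comp ((continuous_apply _).comp continuous_snd)
  exact continuous_eval.comp (h1.prodMk h2)

lemma term_hasDerivAt (ζ : ℕ → ℝ) (n k : ℕ) (x : finSupportSubspace)
    (y : Fin (k + 1) → finSupportSubspace) :
    HasDerivAt (fun t : ℝ => term ζ k (x + t • y (Fin.last k)) (fun i => y i.castSucc) n)
      (term ζ (k + 1) x y n) 0 := by
  set u := pr (n + 1) x with hu
  set w := pr (n + 1) (y (Fin.last k)) with hw
  set v : Fin k → (Fin (n + 1) → ℝ) := fun i => pr (n + 1) (y i.rev.castSucc) with hv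
  have hfun : (fun t : ℝ => term ζ k (x + t • y (Fin.last k)) (fun i => y i.castSucc) n)
      = fun t => iteratedFDeriv ℝ k (Phi ζ n) (u + t • w) v := by
    funext t
    unfold term
    rw [pr_add_smul]
  have hterm : term ζ (k + 1) x y n = fderiv ℝ (iteratedFDeriv ℝ k (Phi ζ n)) u w v := by
    have hm : (fun i : Fin (k + 1) => pr (n + 1) (y i.rev)) = Fin.cons w v := by
      funext i
      refine Fin.cases ?_ ?_ i
      · rw [Fin.cons_zero, fin_rev_zero]
      · intro j
        rw [Fin.cons_succ, fin_rev_succ]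
    unfold term
    rw [hm, iteratedFDeriv_succ_apply_left, Fin.cons_zero, Fin.tail_cons]
  rw [hfun, hterm]
  have hdiff : Differentiable ℝ (iteratedFDeriv ℝ k (Phi ζ n)) :=
    (Phi_contDiff ζ n (k + 1)).differentiable_iteratedFDeriv
      (by exact_mod_cast Nat.lt_succ_self k)
  have hline : HasDerivAt (fun t : ℝ => u + t • w) w 0 := by
    simpa using ((hasDerivAt_id (0 : ℝ)).smul_const w).const_add u
  have e : u + (0 : ℝ) • w = u := by simp
  have h1 : HasFDerivAt (iteratedFDeriv ℝ k (Phi ζ n))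
      (fderiv ℝ (iteratedFDeriv ℝ k (Phi ζ n)) u) ((fun t : ℝ => u + t • w) 0) := by
    simpa [e] using (hdiff u).hasFDerivAt
  have h2 := h1.comp_hasDerivAt 0 hline
  have hA := (ContinuousMultilinearMap.apply ℝ (fun _ : Fin k => (Fin (n + 1) → ℝ)) ℝ
      v).hasFDerivAt (x := iteratedFDeriv ℝ k (Phi ζ n) ((fun t : ℝ => u + t • w) 0))
  have h3 := hA.comp_hasDerivAt 0 h2
  exact h3

lemma Dz_continuous (ζ : ℕ → ℝ) (hζ : ∀ N, ∃ m, N ≤ m ∧ ζ m ≠ 0) (k : ℕ) :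
    Continuous (fun p : finSupportSubspace × (Fin k → finSupportSubspace) =>
      Dz ζ k p.1 p.2) := by
  rw [continuous_iff_continuousAt]
  rintro ⟨x₀, y₀⟩
  obtain ⟨M, ε, hε, hgood⟩ := exists_good ζ hζ x₀
  have hball : ∀ᶠ p : finSupportSubspace × (Fin k → finSupportSubspace) in 𝓝 (x₀, y₀),
      ‖(p.1 : L1) - (x₀ : L1)‖ < ε := by
    have hc : Continuous fun p : finSupportSubspace × (Fin k → finSupportSubspace) =>
        ‖(p.1 : L1) - (x₀ : L1)‖ :=
      ((continuous_subtype_val.comp continuous_fst).sub continuous_const).norm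
    have h0 : ‖((x₀ : L1)) - (x₀ : L1)‖ < ε := by simpa using hε
    exact (isOpen_lt hc continuous_const).mem_nhds h0
  have hev : ∀ᶠ p : finSupportSubspace × (Fin k → finSupportSubspace) in 𝓝 (x₀, y₀),
      (∑ n ∈ Finset.range M, term ζ k p.1 p.2 n) = Dz ζ k p.1 p.2 :=
    hball.mono fun p hp => (Dz_eq_sum (hgood p.1 hp) k p.2).symm
  have hcont : ContinuousAt (fun p : finSupportSubspace × (Fin k → finSupportSubspace) =>
      ∑ n ∈ Finset.range M, term ζ k p.1 p.2 n) (x₀, y₀) :=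
    (continuous_finset_sum _ fun n _ => term_continuous ζ k n).continuousAt
  exact hcont.congr hev

lemma coe_line (x y : finSupportSubspace) (t : ℝ) :
    ((x + t • y : finSupportSubspace) : L1) - (x : L1) = t • (y : L1) := by
  simp [add_sub_cancel_left]

lemma Dz_hasMBDeriv (ζ : ℕ → ℝ) (hζ : ∀ N, ∃ m, N ≤ m ∧ ζ m ≠ 0) (k : ℕ)
    (x : finSupportSubspace) (y : Fin (k + 1) → finSupportSubspace) :
    Tendsto (fun t : ℝ => t⁻¹ • (Dz ζ k (x + t • y (Fin.last k)) (fun i => y i.castSucc)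
        - Dz ζ k x (fun i => y i.castSucc))) (𝓝[≠] (0 : ℝ))
      (𝓝 (Dz ζ (k + 1) x y)) := by
  obtain ⟨M, ε, hε, hgood⟩ := exists_good ζ hζ x
  set φ : ℝ → ℝ := fun t =>
    ∑ n ∈ Finset.range M, term ζ k (x + t • y (Fin.last k)) (fun i => y i.castSucc) n with hφdef
  have hφ : HasDerivAt φ (∑ n ∈ Finset.range M, term ζ (k + 1) x y n) 0 :=
    HasDerivAt.fun_sum fun n _ => term_hasDerivAt ζ n k x y
  have hx_self : ‖(x : L1) - (x : L1)‖ < ε := by simpa using hε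
  have hφ0 : φ 0 = Dz ζ k x (fun i => y i.castSucc) := by
    rw [Dz_eq_sum (hgood x hx_self) k]
    simp only [hφdef, zero_smul, add_zero]
  have hDsum : Dz ζ (k + 1) x y = ∑ n ∈ Finset.range M, term ζ (k + 1) x y n :=
    Dz_eq_sum (hgood x hx_self) (k + 1) y
  have htend : Tendsto (fun t : ℝ => t⁻¹ • (φ t - φ 0)) (𝓝[≠] (0 : ℝ))
      (𝓝 (∑ n ∈ Finset.range M, term ζ (k + 1) x y n)) := by
    have h := hasDerivAt_iff_tendsto_slope.1 hφ
    refine h.congr fun t => ?_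
    rw [slope_def_module, sub_zero]
  rw [hDsum]
  refine htend.congr' ?_
  have hsmall : ∀ᶠ t : ℝ in 𝓝[≠] (0 : ℝ),
      ‖((x + t • y (Fin.last k) : finSupportSubspace) : L1) - (x : L1)‖ < ε := by
    have hkey : ∀ t : ℝ, ‖((x + t • y (Fin.last k) : finSupportSubspace) : L1) - (x : L1)‖
        = |t| * ‖(y (Fin.last k) : L1)‖ := fun t => by
      rw [coe_line, norm_smul, Real.norm_eq_abs]
    have htends : Tendsto (fun t : ℝ => |t| * ‖(y (Fin.last k) : L1)‖) (𝓝 0) (𝓝 0) := by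
      have := (continuous_abs.tendsto (0 : ℝ)).mul_const ‖(y (Fin.last k) : L1)‖
      simpa using this
    have hev := htends.eventually_lt_const hε
    refine ((hev.mono fun t ht => ?_).filter_mono nhdsWithin_le_nhds)
    rw [hkey]
    exact ht
  refine hsmall.mono fun t ht => ?_
  show t⁻¹ • (φ t - φ 0) = t⁻¹ • (Dz ζ k (x + t • y (Fin.last k)) (fun i => y i.castSucc)
      - Dz ζ k x fun i => y i.castSucc)
  rw [hφ0, Dz_eq_sum (hgood _ ht) k]

lemma fz_ge (ζ : ℕ → ℝ) (hζ : ∀ N, ∃ m, N ≤ m ∧ ζ m ≠ 0) (x : finSupportSubspace) (k : ℕ)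
    (hval : ∀ n, n < k → Phi ζ n (pr (n + 1) x) = 1) : (k : ℝ) ≤ fz ζ x := by
  obtain ⟨M, ε, hε, hgood⟩ := exists_good ζ hζ x
  have hx_self : ‖(x : L1) - (x : L1)‖ < ε := by simpa using hε
  have hzero : ∀ n, M ≤ n → Phi ζ n (pr (n + 1) x) = 0 := by
    intro n hn
    have h0 := hgood x hx_self n hn 0
    calc Phi ζ n (pr (n + 1) x)
        = iteratedFDeriv ℝ 0 (Phi ζ n) (pr (n + 1) x) (fun _ => 0) :=
          (iteratedFDeriv_zero_apply _).symm
      _ = 0 := by rw [h0]; rfl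
  have hsum : fz ζ x = ∑ n ∈ Finset.range M, Phi ζ n (pr (n + 1) x) :=
    tsum_eq_sum fun n hn => hzero n (by simpa using hn)
  have hkM : k ≤ M := by
    by_contra hc
    push_neg at hc
    have h1 := hval M hc
    have h2 := hzero M le_rfl
    rw [h1] at h2
    exact one_ne_zero h2
  rw [hsum]
  calc (k : ℝ) = ∑ _n ∈ Finset.range k, (1 : ℝ) := by simp
    _ = ∑ n ∈ Finset.range k, Phi ζ n (pr (n + 1) x) :=
        Finset.sum_congr rfl fun n hn => (hval n (Finset.mem_range.1 hn)).symm
    _ ≤ ∑ n ∈ Finset.range M, Phi ζ n (pr (n + 1) x) :=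
        Finset.sum_le_sum_of_subset_of_nonneg (Finset.range_subset_range.2 hkM)
          fun n _ _ => Phi_nonneg ζ n _

/-- the index type: points of `ℓ¹` not in `E` -/
def Idx : Type := {z : L1 // z ∉ finSupportSubspace}

/-- coordinates of an index point -/
def zeta (z : Idx) : ℕ → ℝ := fun n => (z.1 : ∀ _ : ℕ, ℝ) n

lemma zeta_good (z : Idx) : ∀ N, ∃ m, N ≤ m ∧ zeta z m ≠ 0 := by
  intro N
  by_contra h
  push_neg at h
  exact z.2 ⟨N, fun n hn => h n hn⟩

end Patho

end PathoAux

/-- There exists a complete locally convex space `F` and a smooth map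
`f : E → F` from the dense subspace `E ⊆ ℓ¹` of eventually-zero sequences
which admits no continuous extension to `E ∪ {z}` for any `z ∈ ℓ¹ \ E`. -/
theorem exists_pathological_smooth_map : Nonempty PathologicalSmoothMap := by
  classical
  refine ⟨{ F := Patho.Idx → ℝ
            f := fun x z => Patho.fz (Patho.zeta z) x
            smooth := ?_
            no_extension := ?_ }⟩
  · -- smoothness
    intro n
    refine ⟨fun k p z => Patho.Dz (Patho.zeta z) k p.1 p.2, ?_, ?_, ?_⟩
    · intro x y
      funext z
      exact Patho.Dz_zero_eq _ x y
    · intro k _ x _ y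
      unfold HasMBDerivAt
      rw [tendsto_pi_nhds]
      intro z
      refine (Patho.Dz_hasMBDeriv (Patho.zeta z) (Patho.zeta_good z) k x y).congr fun t => ?_
      simp only [Pi.smul_apply, Pi.sub_apply, smul_eq_mul]
    · intro k _
      refine Continuous.continuousOn ?_
      exact continuous_pi fun z => Patho.Dz_continuous (Patho.zeta z) (Patho.zeta_good z) k
  · -- no extension
    intro z hz
    rintro ⟨g, hgc, hge⟩
    set zi : Patho.Idx := ⟨z, hz⟩ with hzi
    set ζ : ℕ → ℝ := Patho.zeta zi with hζdef
    have hζ : ∀ N, ∃ m, N ≤ m ∧ ζ m ≠ 0 := Patho.zeta_good zi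
    set yk : ℕ → Patho.L1 := fun k => ∑ m ∈ Finset.range k, lp.single 1 m (ζ m) with hykdef
    have hyk_apply : ∀ k j, (yk k : ∀ _ : ℕ, ℝ) j = if j < k then ζ j else 0 := by
      intro k j
      rw [hykdef]
      rw [lp.coeFn_sum, Finset.sum_apply]
      have hterm : ∀ m ∈ Finset.range k,
          (lp.single (E := fun _ : ℕ => ℝ) 1 m (ζ m) : ∀ _ : ℕ, ℝ) j
            = if j = m then ζ j else 0 := by
        intro m _
        rcases eq_or_ne j m with rfl | hne
        · simp [lp.single_apply_self]
        · simp [lp.single_apply_ne (E := fun _ : ℕ => ℝ) 1 m (ζ m) hne, hne]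
      rw [Finset.sum_congr rfl hterm, Finset.sum_ite_eq (Finset.range k) j fun _ => ζ j]
      simp [Finset.mem_range]
    have hykmem : ∀ k, yk k ∈ finSupportSubspace := by
      intro k
      refine ⟨k, fun n hn => ?_⟩
      rw [hyk_apply k n, if_neg (by omega)]
    have hconv : Tendsto yk atTop (𝓝 z) := by
      have hs := lp.hasSum_single (E := fun _ : ℕ => ℝ) (p := 1) (by norm_num) z
      exact hs.tendsto_sum_nat
    have hzT : z ∈ ((finSupportSubspace : Set (lp (fun _ : ℕ => ℝ) 1)) ∪ {z} :
        Set (lp (fun _ : ℕ => ℝ) 1)) := Or.inr rfl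
    have hconvT : Tendsto (fun k => (⟨yk k, Or.inl (hykmem k)⟩ :
        ((finSupportSubspace : Set (lp (fun _ : ℕ => ℝ) 1)) ∪ {z} :
          Set (lp (fun _ : ℕ => ℝ) 1)))) atTop (𝓝 ⟨z, hzT⟩) := by
      rw [tendsto_subtype_rng]
      exact hconv
    have hlow : ∀ k : ℕ, (k : ℝ) ≤ g ⟨yk k, Or.inl (hykmem k)⟩ zi := by
      intro k
      have := hge ⟨yk k, hykmem k⟩
      rw [this]
      refine Patho.fz_ge ζ hζ ⟨yk k, hykmem k⟩ k ?_
      intro m hm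
      unfold Patho.Phi
      refine Finset.prod_eq_one fun i _ => ?_
      have hik : (i : ℕ) < k := by
        have := i.isLt
        omega
      have hpr : Patho.pr (m + 1) (⟨yk k, hykmem k⟩ : finSupportSubspace) i = ζ i := by
        show (yk k : ∀ _ : ℕ, ℝ) i = ζ i
        rw [hyk_apply k i, if_pos hik]
      rw [hpr, Patho.H_self]
    have h1 : Tendsto (fun k : ℕ => g ⟨yk k, Or.inl (hykmem k)⟩ zi) atTop atTop :=
      tendsto_atTop_mono hlow tendsto_natCast_atTop_atTop
    have h2 : Tendsto (fun k : ℕ => g ⟨yk k, Or.inl (hykmem k)⟩ zi) atTop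
        (𝓝 (g ⟨z, hzT⟩ zi)) :=
      ((continuous_apply zi).tendsto _).comp ((hgc.tendsto _).comp hconvT)
    exact not_tendsto_nhds_of_tendsto_atTop h1 _ h2
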